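/- Let G be a symmetric 2×2 integer matrix whose two diagonal entries are even, which is positive definite, and such that 3·G⁻¹ has integer entries (i.e. there exists an integer matrix N with G·N = 3·I). Then G is integrally congruent to the Gram matrix of A₂: there exists a matrix P ∈ GL₂(ℤ) with Pᵀ G P = [[2,−1],[−1,2]]. -/

import Mathlib

open Matrix

lemma tfin (p q r s : ℤ) : (!![p,q;r,s])ᵀ = !![p,r;q,s] := by
  ext i j; fin_cases i <;> fin_cases j <;> rfl

lemma congr2 (a b c p q r s : ℤ) :
    (!![p,q;r,s])ᵀ * !![a,b;b,c] * !![p,q;r,s]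
    = !![a*p*p + 2*b*p*r + c*r*r, a*p*q + b*(p*s + q*r) + c*r*s;
         a*p*q + b*(p*s + q*r) + c*r*s, a*q*q + 2*b*q*s + c*s*s] := by
  rw [tfin]
  ext i j; fin_cases i <;> fin_cases j <;>
    simp [Matrix.mul_apply, Fin.sum_univ_two] <;> ring

lemma step (a b c a' b' c' : ℤ) (Q : Matrix (Fin 2) (Fin 2) ℤ) (hQ : IsUnit Q.det)
    (hkey : Qᵀ * !![a,b;b,c] * Q = !![a',b';b',c'])
    (h : ∃ P : Matrix (Fin 2) (Fin 2) ℤ, IsUnit P.det ∧ Pᵀ * !![a',b';b',c'] * P = !![2,-1;-1,2]) :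
    ∃ P : Matrix (Fin 2) (Fin 2) ℤ, IsUnit P.det ∧ Pᵀ * !![a,b;b,c] * P = !![2,-1;-1,2] := by
  obtain ⟨P, hP, hPe⟩ := h
  refine ⟨Q * P, ?_, ?_⟩
  · rw [Matrix.det_mul]; exact hQ.mul hP
  · rw [Matrix.transpose_mul,
      show Pᵀ * Qᵀ * !![a,b;b,c] * (Q * P) = Pᵀ * (Qᵀ * !![a,b;b,c] * Q) * P by
        simp only [Matrix.mul_assoc], hkey, hPe]

lemma aux2 : ∀ n : ℕ, ∀ a b c : ℤ, a + c ≤ n → a % 2 = 0 → c % 2 = 0 → 0 < a → 0 < c →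
    0 < a*c - b*b → (a*c - b*b) ∣ 9 →
    ∃ P : Matrix (Fin 2) (Fin 2) ℤ, IsUnit P.det ∧ Pᵀ * !![a,b;b,c] * P = !![2,-1;-1,2] := by
  intro n
  induction n with
  | zero => intro a b c hn _ _ ha0 hc0 _ _; exfalso; omega
  | succ n ih =>
    intro a b c hn ha2 hc2 ha0 hc0 hdet hdvd
    rcases lt_or_ge a (2*b) with h | h1
    · -- b > 0, a < 2b : reduce c
      refine step a b c a (b-a) (a-2*b+c) !![1,-1;0,1]
        (by rw [Matrix.det_fin_two_of]; norm_num)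
        (by rw [congr2]; ext i j; fin_cases i <;> fin_cases j <;> simp <;> ring) ?_
      have e : a*(a-2*b+c) - (b-a)*(b-a) = a*c - b*b := by ring
      have hc' : 0 < a-2*b+c := by nlinarith
      exact ih a (b-a) (a-2*b+c) (by omega) ha2 (by omega) ha0 hc'
        (by rw [e]; exact hdet) (by rw [e]; exact hdvd)
    rcases lt_or_ge a (-(2*b)) with h | h2
    · -- b < 0, a < -2b : reduce c
      refine step a b c a (b+a) (a+2*b+c) !![1,1;0,1]
        (by rw [Matrix.det_fin_two_of]; norm_num)
        (by rw [congr2]; ext i j; fin_cases i <;> fin_cases j <;> simp <;> ring) ?_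
      have e : a*(a+2*b+c) - (b+a)*(b+a) = a*c - b*b := by ring
      have hc' : 0 < a+2*b+c := by nlinarith
      exact ih a (b+a) (a+2*b+c) (by omega) ha2 (by omega) ha0 hc'
        (by rw [e]; exact hdet) (by rw [e]; exact hdvd)
    rcases lt_or_ge c (2*b) with h | h3
    · -- reduce a : e1 -> e1 - e2
      refine step a b c (a-2*b+c) (b-c) c !![1,0;-1,1]
        (by rw [Matrix.det_fin_two_of]; norm_num)
        (by rw [congr2]; ext i j; fin_cases i <;> fin_cases j <;> simp <;> ring) ?_
      have e : (a-2*b+c)*c - (b-c)*(b-c) = a*c - b*b := by ring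
      have ha' : 0 < a-2*b+c := by nlinarith
      exact ih (a-2*b+c) (b-c) c (by omega) (by omega) hc2 ha' hc0
        (by rw [e]; exact hdet) (by rw [e]; exact hdvd)
    rcases lt_or_ge c (-(2*b)) with h | h4
    · refine step a b c (a+2*b+c) (b+c) c !![1,0;1,1]
        (by rw [Matrix.det_fin_two_of]; norm_num)
        (by rw [congr2]; ext i j; fin_cases i <;> fin_cases j <;> simp <;> ring) ?_
      have e : (a+2*b+c)*c - (b+c)*(b+c) = a*c - b*b := by ring
      have ha' : 0 < a+2*b+c := by nlinarith
      exact ih (a+2*b+c) (b+c) c (by omega) (by omega) hc2 ha' hc0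
        (by rw [e]; exact hdet) (by rw [e]; exact hdvd)
    -- base case: 2|b| ≤ a, 2|b| ≤ c
    have h9 : a*c - b*b ≤ 9 := Int.le_of_dvd (by norm_num) hdvd
    have hbb : 4*(b*b) ≤ a*c := by
      rcases le_or_gt 0 b with hb | hb
      · nlinarith
      · nlinarith
    have hb1 : -1 ≤ b ∧ b ≤ 1 := by constructor <;> nlinarith
    have ha1 : 2 ≤ a := by omega
    have hc1 : 2 ≤ c := by omega
    have ha5 : a ≤ 6 := by nlinarith [mul_le_mul_of_nonneg_left hc1 ha0.le]
    have hc5 : c ≤ 6 := by nlinarith [mul_le_mul_of_nonneg_left ha1 hc0.le]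
    obtain ⟨hbl, hbr⟩ := hb1
    interval_cases a <;> interval_cases c <;> interval_cases b <;>
      first
        | omega
        | (exfalso; revert hdvd; decide)
        | (refine ⟨1, ?_, ?_⟩ <;> simp <;> done)
        | (refine ⟨!![1,0;0,-1], ?_, by decide⟩;
           rw [show (!![1,0;0,-1] : Matrix (Fin 2) (Fin 2) ℤ).det = -1 from by decide];
           exact isUnit_one.neg)

/-- The definite half of the classification of rank-2 3-elementary even lattices:
a symmetric positive definite 2×2 integer matrix `G` with even diagonal such that
`3·G⁻¹` is integral is integrally congruent to the Gram matrix of `A₂`. -/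
theorem posdef_even_three_elementary_rank_two_is_A2
    (G : Matrix (Fin 2) (Fin 2) ℤ)
    (hsymm : G.IsSymm)
    (heven : Even (G 0 0) ∧ Even (G 1 1))
    (hposdef : ∀ x : Fin 2 → ℤ, x ≠ 0 → 0 < dotProduct x (G.mulVec x))
    (helem : ∃ N : Matrix (Fin 2) (Fin 2) ℤ, G * N = 3 • (1 : Matrix (Fin 2) (Fin 2) ℤ)) :
    ∃ P : Matrix (Fin 2) (Fin 2) ℤ, IsUnit P.det ∧
      Pᵀ * G * P = !![2, -1; -1, 2] := by
  set a := G 0 0 with ha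
  set b := G 0 1 with hb
  set c := G 1 1 with hc
  have hba : G 1 0 = b := congrFun (congrFun hsymm 0) 1
  have hG : G = !![a, b; b, c] := by
    ext i j; fin_cases i <;> fin_cases j <;> simp [ha, hb, hc, hba]
  have ha0 : 0 < a := by
    have := hposdef ![1,0] (by intro h; have := congrFun h 0; simp at this)
    simpa [hG, dotProduct, Matrix.mulVec, Fin.sum_univ_two] using this
  have hc0 : 0 < c := by
    have := hposdef ![0,1] (by intro h; have := congrFun h 1; simp at this)
    simpa [hG, dotProduct, Matrix.mulVec, Fin.sum_univ_two] using this
  have hdet : 0 < a*c - b*b := by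
    have := hposdef ![b,-a] (by
      intro h; have := congrFun h 1; simp at this; omega)
    have h2 : 0 < a*(a*c - b*b) := by
      have e : dotProduct ![b,-a] (G.mulVec ![b,-a]) = a*(a*c-b*b) := by
        rw [hG]; simp [dotProduct, Matrix.mulVec, Fin.sum_univ_two]; ring
      rw [← e]; exact this
    nlinarith
  have hdvd : (a*c - b*b) ∣ 9 := by
    obtain ⟨N, hN⟩ := helem
    refine ⟨N.det, ?_⟩
    have h31 : (3 • (1 : Matrix (Fin 2) (Fin 2) ℤ)).det = 9 := by decide
    have := congrArg Matrix.det hN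
    rw [Matrix.det_mul, h31,
      show G.det = a*c - b*b by rw [hG, Matrix.det_fin_two_of]] at this
    exact this.symm
  rw [hG]
  exact aux2 (a+c).toNat a b c (by omega) (Int.even_iff.mp heven.1) (Int.even_iff.mp heven.2)
    ha0 hc0 hdet hdvd
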